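/- Let T be a positive integer and let β_1,…,β_T ∈ (0,1); set α_t := 1−β_t and ᾱ_t := ∏_{i=1}^t α_i. Fix x_0 ∈ ℝ and let ε_1,…,ε_T be independent random variables, each with law gaussianReal 0 1. Define recursively x_t := √α_t · x_{t−1} + √β_t · ε_t for t = 1,…,T. Then for every t ∈ {1,…,T} the law of x_t is gaussianReal (√ᾱ_t · x_0) (1−ᾱ_t). (One-dimensional form of the forward-marginal claim of Proposition 3.1 for the continuous diffusion model.) -/

import Mathlib

open MeasureTheory ProbabilityTheory Finset

open scoped NNReal ENNReal Real

section Aux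

/-- Pointwise bound on the Gaussian pdf. -/
lemma aux_pdf_bound (μ : ℝ) (v : ℝ≥0) (x : ℝ) :
    ‖gaussianPDFReal μ v x‖ ≤ (Real.sqrt (2 * π * v))⁻¹ := by
  rw [Real.norm_eq_abs, abs_of_nonneg (gaussianPDFReal_nonneg μ v x), gaussianPDFReal]
  have h1 : Real.exp (-(x - μ)^2 / (2 * v)) ≤ 1 := by
    rw [Real.exp_le_one_iff]
    apply div_nonpos_of_nonpos_of_nonneg
    · exact neg_nonpos.mpr (sq_nonneg _)
    · positivity
  have h2 : (0:ℝ) ≤ (Real.sqrt (2 * π * v))⁻¹ := by positivity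
  calc (Real.sqrt (2 * π * v))⁻¹ * Real.exp (-(x - μ)^2 / (2 * v))
      ≤ (Real.sqrt (2 * π * v))⁻¹ * 1 := mul_le_mul_of_nonneg_left h1 h2
    _ = _ := mul_one _

lemma aux_pdf_shift (w : ℝ≥0) (x z : ℝ) :
    gaussianPDFReal x w z = gaussianPDFReal 0 w (z - x) := by
  simp only [gaussianPDFReal, sub_zero]

/-- Convolution identity for Gaussian pdfs. -/
lemma aux_pdfconv (m z : ℝ) {v w : ℝ≥0} (hv : v ≠ 0) (hw : w ≠ 0) :
    ∫ x, gaussianPDFReal m v x * gaussianPDFReal 0 w (z - x)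
      = gaussianPDFReal m (v + w) z := by
  have hv' : (0:ℝ) < v := lt_of_le_of_ne v.coe_nonneg (by exact_mod_cast (Ne.symm hv))
  have hw' : (0:ℝ) < w := lt_of_le_of_ne w.coe_nonneg (by exact_mod_cast (Ne.symm hw))
  have hvw : (0:ℝ) < (v:ℝ) + w := by positivity
  set k : ℝ := ((v:ℝ) + w) / (2 * v * w) with hk
  have hk' : 0 < k := by positivity
  set p : ℝ := (m * w + z * v) / ((v:ℝ) + w) with hp
  have key : ∀ x, gaussianPDFReal m v x * gaussianPDFReal 0 w (z - x)
      = ((Real.sqrt (2 * π * v))⁻¹ * (Real.sqrt (2 * π * w))⁻¹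
          * Real.exp (-(z - m)^2 / (2 * ((v:ℝ) + w)))) * Real.exp (-(k * (x - p)^2)) := by
    intro x
    simp only [gaussianPDFReal]
    rw [mul_mul_mul_comm, ← Real.exp_add, mul_assoc _ (rexp _) (rexp _), ← Real.exp_add]
    congr 1
    have h1 : (v:ℝ) ≠ 0 := hv'.ne'
    have h2 : (w:ℝ) ≠ 0 := hw'.ne'
    have h3 : (v:ℝ) + w ≠ 0 := hvw.ne'
    rw [hk, hp, Real.exp_eq_exp]
    field_simp
    ring
  simp_rw [key]
  rw [integral_const_mul]
  have hshift : ∫ x, Real.exp (-(k * (x - p)^2)) = ∫ x, Real.exp (-(k * x^2)) :=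
    integral_sub_right_eq_self (fun x => Real.exp (-(k * x^2))) p
  rw [hshift]
  simp_rw [neg_mul_eq_neg_mul]
  rw [integral_gaussian k]
  rw [gaussianPDFReal]
  have hc : (Real.sqrt (2 * π * v))⁻¹ * (Real.sqrt (2 * π * w))⁻¹ * Real.sqrt (π / k)
      = (Real.sqrt (2 * π * ((v:ℝ) + w)))⁻¹ := by
    rw [← Real.sqrt_inv, ← Real.sqrt_inv, ← Real.sqrt_mul (by positivity),
      ← Real.sqrt_mul (by positivity), ← Real.sqrt_inv]
    congr 1
    have hπ : π ≠ 0 := Real.pi_ne_zero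
    have h1 : (v:ℝ) ≠ 0 := hv'.ne'
    have h2 : (w:ℝ) ≠ 0 := hw'.ne'
    have h3 : (v:ℝ) + w ≠ 0 := hvw.ne'
    rw [hk]
    field_simp
  push_cast
  rw [mul_comm ((Real.sqrt (2 * π * ((v:ℝ) + w)))⁻¹) _, ← hc]
  ring

/-- The convolution of two Gaussian measures is Gaussian. -/
lemma aux_gaussian_conv (m : ℝ) (v w : ℝ≥0) :
    ((gaussianReal m v).prod (gaussianReal 0 w)).map (fun p : ℝ × ℝ => p.1 + p.2)
      = gaussianReal m (v + w) := by
  by_cases hv : v = 0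
  · subst hv
    rw [gaussianReal_zero_var, Measure.dirac_prod,
      Measure.map_map measurable_add (measurable_prodMk_left), zero_add]
    have h1 : ((fun p : ℝ × ℝ => p.1 + p.2) ∘ Prod.mk m) = fun y => m + y := rfl
    rw [h1, gaussianReal_map_const_add, zero_add]
  by_cases hw : w = 0
  · subst hw
    rw [gaussianReal_zero_var, Measure.prod_dirac,
      Measure.map_map measurable_add (measurable_prodMk_right), add_zero]
    have h1 : ((fun p : ℝ × ℝ => p.1 + p.2) ∘ fun x : ℝ => (x, (0:ℝ))) = fun x : ℝ => x + 0 :=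
      rfl
    rw [h1]
    simp only [add_zero]
    exact Measure.map_id
  have hvw : v + w ≠ 0 := by
    intro h
    exact hv (by simpa using congrArg (fun a => a - w) h |> fun _ => (add_eq_zero.mp h).1)
  have hjoint : Measurable (fun q : ℝ × ℝ => gaussianPDF q.1 w q.2) := by
    have h0 : (fun q : ℝ × ℝ => gaussianPDF q.1 w q.2)
        = fun q : ℝ × ℝ => ENNReal.ofReal (gaussianPDFReal 0 w (q.2 - q.1)) := by
      funext q
      exact congrArg ENNReal.ofReal (aux_pdf_shift w q.1 q.2)
    rw [h0]
    exact ((measurable_gaussianPDFReal 0 w).comp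
      (measurable_snd.sub measurable_fst)).ennreal_ofReal
  ext s hs
  rw [Measure.map_apply measurable_add hs, Measure.prod_apply (measurable_add hs)]
  have hslice : ∀ x : ℝ, (gaussianReal 0 w) (Prod.mk x ⁻¹' ((fun p : ℝ × ℝ => p.1 + p.2) ⁻¹' s))
      = ∫⁻ z in s, gaussianPDF x w z := by
    intro x
    have h1 : Prod.mk x ⁻¹' ((fun p : ℝ × ℝ => p.1 + p.2) ⁻¹' s) = (fun y => x + y) ⁻¹' s := rfl
    rw [h1, ← Measure.map_apply (measurable_const_add x) hs, gaussianReal_map_const_add,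
      zero_add, gaussianReal_of_var_ne_zero _ hw, withDensity_apply _ hs]
  simp_rw [hslice]
  have hF : Measurable fun x => ∫⁻ z in s, gaussianPDF x w z :=
    Measurable.lintegral_prod_right hjoint
  rw [gaussianReal_of_var_ne_zero _ hv,
    lintegral_withDensity_eq_lintegral_mul _ (measurable_gaussianPDF m v) hF]
  simp only [Pi.mul_apply]
  have hpull : ∀ x : ℝ, gaussianPDF m v x * ∫⁻ z in s, gaussianPDF x w z
      = ∫⁻ z in s, gaussianPDF m v x * gaussianPDF x w z := fun x =>
    (lintegral_const_mul _ (hjoint.comp (measurable_prodMk_left))).symm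
  simp_rw [hpull]
  have hum : Measurable (Function.uncurry fun x z => gaussianPDF m v x * gaussianPDF x w z) :=
    ((measurable_gaussianPDF m v).comp measurable_fst).mul hjoint
  rw [lintegral_lintegral_swap hum.aemeasurable]
  have hinner : ∀ z : ℝ, ∫⁻ x, gaussianPDF m v x * gaussianPDF x w z
      = gaussianPDF m (v + w) z := by
    intro z
    simp_rw [show ∀ x : ℝ, gaussianPDF x w z = ENNReal.ofReal (gaussianPDFReal 0 w (z - x))
        from fun x => congrArg ENNReal.ofReal (aux_pdf_shift w x z),
      show ∀ x : ℝ, gaussianPDF m v x = ENNReal.ofReal (gaussianPDFReal m v x) from fun _ => rfl,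
      ← ENNReal.ofReal_mul (gaussianPDFReal_nonneg m v _)]
    have hint : Integrable fun x => gaussianPDFReal m v x * gaussianPDFReal 0 w (z - x) := by
      have h1 : Integrable fun x => gaussianPDFReal 0 w (z - x) * gaussianPDFReal m v x :=
        Integrable.bdd_mul (integrable_gaussianPDFReal m v)
          (((measurable_gaussianPDFReal 0 w).comp (measurable_const.sub measurable_id))
            |>.aestronglyMeasurable)
          (c := (Real.sqrt (2 * π * w))⁻¹) (ae_of_all _ fun x => aux_pdf_bound 0 w (z - x))
      exact h1.congr (by simp [mul_comm])
    rw [← ofReal_integral_eq_lintegral_ofReal hint (ae_of_all _ fun x =>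
      mul_nonneg (gaussianPDFReal_nonneg _ _ _) (gaussianPDFReal_nonneg _ _ _)),
      aux_pdfconv m z hv hw]
    rfl
  simp_rw [hinner]
  rw [gaussianReal_of_var_ne_zero _ hvw, withDensity_apply _ hs]

/-- Sum of independent Gaussian random variables is Gaussian. -/
lemma aux_indep_sum {Ω : Type*} [MeasureSpace Ω] (P : Measure Ω) [IsProbabilityMeasure P]
    {X Y : Ω → ℝ} (hX : Measurable X) (hY : Measurable Y) (h : IndepFun X Y P)
    {m : ℝ} {v w : ℝ≥0} (hXl : P.map X = gaussianReal m v) (hYl : P.map Y = gaussianReal 0 w) :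
    P.map (fun ω => X ω + Y ω) = gaussianReal m (v + w) := by
  have hprod : P.map (fun ω => (X ω, Y ω)) = (P.map X).prod (P.map Y) :=
    (indepFun_iff_map_prod_eq_prod_map_map hX.aemeasurable hY.aemeasurable).mp h
  have h1 : P.map (fun ω => X ω + Y ω)
      = (P.map (fun ω => (X ω, Y ω))).map (fun p : ℝ × ℝ => p.1 + p.2) :=
    (Measure.map_map measurable_add (hX.prodMk hY)).symm
  rw [h1, hprod, hXl, hYl, aux_gaussian_conv]

end Aux

/-- One-dimensional forward-marginal claim of Proposition 3.1 for the continuous diffusion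
model: with `x_t = √α_t · x_{t-1} + √β_t · ε_t` and independent standard Gaussian noises,
the law of `x_t` is `gaussianReal (√ᾱ_t · x_0) (1 - ᾱ_t)`. -/
theorem forward_marginal_continuous
    {Ω : Type*} [MeasureSpace Ω] (P : Measure Ω) [IsProbabilityMeasure P]
    (T : ℕ) (hT : 0 < T) (β : ℕ → ℝ) (hβ : ∀ t, 1 ≤ t → t ≤ T → β t ∈ Set.Ioo (0 : ℝ) 1)
    (x₀ : ℝ) (ε : ℕ → Ω → ℝ) (hεmeas : ∀ t, Measurable (ε t))
    (hindep : iIndepFun ε P)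
    (hεlaw : ∀ t, P.map (ε t) = gaussianReal 0 1)
    (x : ℕ → Ω → ℝ) (hx0 : x 0 = fun _ => x₀)
    (hxrec : ∀ t, x (t + 1) =
      fun ω => Real.sqrt (1 - β (t + 1)) * x t ω + Real.sqrt (β (t + 1)) * ε (t + 1) ω) :
    ∀ t, 1 ≤ t → t ≤ T →
      P.map (x t) =
        gaussianReal (Real.sqrt (∏ i ∈ Finset.Icc 1 t, (1 - β i)) * x₀)
          (Real.toNNReal (1 - ∏ i ∈ Finset.Icc 1 t, (1 - β i))) := by
  -- measurability of `x t` with respect to the σ-algebra generated by `ε 1, …, ε t`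
  have h_le : ∀ i, MeasurableSpace.comap (ε i) Real.measurableSpace ≤ ‹MeasureSpace Ω›.toMeasurableSpace :=
    fun i => (hεmeas i).comap_le
  have hxM : ∀ t, Measurable[⨆ i ∈ Set.Iic t, MeasurableSpace.comap (ε i) Real.measurableSpace]
      (x t) := by
    intro t
    induction t with
    | zero => rw [hx0]; exact measurable_const
    | succ t ih =>
      rw [hxrec t]
      have hmono : (⨆ i ∈ Set.Iic t, MeasurableSpace.comap (ε i) Real.measurableSpace)
          ≤ ⨆ i ∈ Set.Iic (t+1), MeasurableSpace.comap (ε i) Real.measurableSpace := by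
        exact iSup_le fun i => iSup_le fun hi =>
          le_iSup₂ (f := fun i (_ : i ∈ Set.Iic (t+1)) =>
            MeasurableSpace.comap (ε i) Real.measurableSpace) i (Set.mem_Iic.mpr (le_trans (Set.mem_Iic.mp hi) (Nat.le_succ t)))
      have hεM : Measurable[⨆ i ∈ Set.Iic (t+1),
          MeasurableSpace.comap (ε i) Real.measurableSpace] (ε (t+1)) := by
        have h1 : Measurable[MeasurableSpace.comap (ε (t+1)) Real.measurableSpace] (ε (t+1)) :=
          Measurable.of_comap_le le_rfl
        exact h1.mono (le_iSup₂ (f := fun i (_ : i ∈ Set.Iic (t+1)) =>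
          MeasurableSpace.comap (ε i) Real.measurableSpace) (t+1) Set.self_mem_Iic) le_rfl
      exact ((ih.mono hmono le_rfl).const_mul _).add (hεM.const_mul _)
  have hxmeas : ∀ t, Measurable (x t) := fun t =>
    (hxM t).mono (iSup_le fun i => iSup_le fun _ => h_le i) le_rfl
  -- independence of `x t` and `ε (t+1)`
  have hxε : ∀ t, IndepFun (x t) (ε (t+1)) P := by
    intro t
    rw [IndepFun_iff_Indep]
    have h := indep_biSup_compl h_le hindep.iIndep (Set.Iic t)
    refine indep_of_indep_of_le_left (indep_of_indep_of_le_right h ?_) ?_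
    · exact le_iSup₂ (f := fun i (_ : i ∈ (Set.Iic t)ᶜ) =>
        MeasurableSpace.comap (ε i) Real.measurableSpace) (t+1) (by simp)
    · exact (hxM t).comap_le
  -- the law of `x t`, proved by induction (the claim also holds for `t = 0`)
  suffices H : ∀ t, t ≤ T → P.map (x t) =
      gaussianReal (Real.sqrt (∏ i ∈ Finset.Icc 1 t, (1 - β i)) * x₀)
        (Real.toNNReal (1 - ∏ i ∈ Finset.Icc 1 t, (1 - β i))) by
    exact fun t _ h2 => H t h2
  intro t
  induction t with
  | zero =>
    intro _
    rw [show Finset.Icc 1 0 = (∅ : Finset ℕ) from Finset.Icc_eq_empty (by omega),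
      Finset.prod_empty, sub_self, Real.sqrt_one, one_mul, Real.toNNReal_zero,
      gaussianReal_zero_var, hx0, Measure.map_const]
    simp
  | succ t ih =>
    intro ht1
    have htT : t ≤ T := Nat.le_of_succ_le ht1
    obtain ⟨hβ0, hβ1⟩ := hβ (t+1) (Nat.succ_le_succ (Nat.zero_le t)) ht1
    set A : ℝ := ∏ i ∈ Finset.Icc 1 t, (1 - β i) with hA
    have hA0 : 0 < A := Finset.prod_pos fun i hi => by
      have hi' := Finset.mem_Icc.mp hi
      have h := hβ i hi'.1 (le_trans hi'.2 htT)
      linarith [h.2]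
    have hA1 : A ≤ 1 := Finset.prod_le_one
      (fun i hi => by
        have hi' := Finset.mem_Icc.mp hi
        have h := hβ i hi'.1 (le_trans hi'.2 htT)
        linarith [h.2])
      (fun i hi => by
        have hi' := Finset.mem_Icc.mp hi
        have h := hβ i hi'.1 (le_trans hi'.2 htT)
        linarith [h.1])
    have hα0 : (0:ℝ) ≤ 1 - β (t+1) := by linarith
    have hXlaw : P.map (fun ω => Real.sqrt (1 - β (t+1)) * x t ω)
        = gaussianReal (Real.sqrt (1 - β (t+1)) * (Real.sqrt A * x₀))
          (NNReal.mk ((Real.sqrt (1 - β (t+1)))^2) (sq_nonneg _) * Real.toNNReal (1 - A)) := by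
      have h1 : (fun ω => Real.sqrt (1 - β (t+1)) * x t ω)
          = (fun y => Real.sqrt (1 - β (t+1)) * y) ∘ x t := rfl
      rw [h1, ← Measure.map_map (measurable_const_mul _) (hxmeas t), ih htT,
        gaussianReal_map_const_mul]
    have hYlaw : P.map (fun ω => Real.sqrt (β (t+1)) * ε (t+1) ω)
        = gaussianReal 0 (NNReal.mk ((Real.sqrt (β (t+1)))^2) (sq_nonneg _) * 1) := by
      have h1 : (fun ω => Real.sqrt (β (t+1)) * ε (t+1) ω)
          = (fun y => Real.sqrt (β (t+1)) * y) ∘ ε (t+1) := rfl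
      rw [h1, ← Measure.map_map (measurable_const_mul _) (hεmeas (t+1)), hεlaw,
        gaussianReal_map_const_mul, mul_zero]
    have hInd : IndepFun (fun ω => Real.sqrt (1 - β (t+1)) * x t ω)
        (fun ω => Real.sqrt (β (t+1)) * ε (t+1) ω) P :=
      (hxε t).comp (measurable_const_mul _) (measurable_const_mul _)
    rw [hxrec t, aux_indep_sum P ((hxmeas t).const_mul _) ((hεmeas (t+1)).const_mul _)
      hInd hXlaw hYlaw]
    have hprod : ∏ i ∈ Finset.Icc 1 (t+1), (1 - β i) = A * (1 - β (t+1)) := by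
      rw [Finset.prod_Icc_succ_top (Nat.succ_le_succ (Nat.zero_le t)), ← hA]
    congr 1
    · rw [hprod, Real.sqrt_mul hA0.le]
      ring
    · rw [hprod]
      apply NNReal.coe_injective
      push_cast [NNReal.coe_mk]
      rw [Real.coe_toNNReal _ (by linarith), Real.coe_toNNReal _ (by nlinarith),
        Real.sq_sqrt hα0, Real.sq_sqrt hβ0.le]
      ring
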